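/- Given ρ₁, ρ₂ ≥ 0 with ρ₁ + ρ₂ < 1 and α₁ᶜ, α₂ᶜ ≤ 0 with α₁ᶜα₂ᶜ < 1, the linear system a₁₁θ₁ + a₁₂θ₂ = a₁₃ and a₂₁θ₁ + a₂₂θ₂ = a₂₃ (with coefficients aᵢⱼ as defined in the paper) has a unique solution (θ₁*, θ₂*). -/
import Mathlib


/-- The linear system `a₁₁θ₁+a₁₂θ₂=a₁₃`, `a₂₁θ₁+a₂₂θ₂=a₂₃` has a unique solution. -/
theorem stmt_3 (ρ₁ ρ₂ α₁C α₂C a₁₃ a₂₃ : ℝ)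
    (hρ₁ : 0 ≤ ρ₁) (hρ₂ : 0 ≤ ρ₂) (hρsum : ρ₁ + ρ₂ < 1)
    (hα₁ : α₁C ≤ 0) (hα₂ : α₂C ≤ 0) (hαα : α₁C * α₂C < 1) :
    let η₁ := (1 - ρ₁) - α₁C * ρ₂
    let η₂ := (1 - ρ₂) - α₂C * ρ₁
    let a₁₁ := ((ρ₁ + ρ₂ - 1) - (ρ₁ - 1) * ρ₁ * α₂C - ρ₁ * ρ₂ * α₁C * α₂C) / (η₁ * η₂)
    let a₁₂ := ((1 - ρ₁) * ρ₁ - (1 - ρ₁) * (1 - ρ₂) * α₁C) / (η₁ * η₂)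
    let a₂₁ := (-(ρ₁ * ρ₂ * α₂C) - (ρ₂ - 1) * ρ₂ * α₁C * α₂C) / (η₁ * η₂)
    let a₂₂ := ((1 - ρ₁) * (ρ₂ - 1) + ρ₂ * (1 - ρ₂) * α₁C - (ρ₁ + ρ₂ - 1) * α₁C * α₂C) / (η₁ * η₂)
    ∃! θ : ℝ × ℝ, a₁₁ * θ.1 + a₁₂ * θ.2 = a₁₃ ∧ a₂₁ * θ.1 + a₂₂ * θ.2 = a₂₃ := by
  intro η₁ η₂ a₁₁ a₁₂ a₂₁ a₂₂
  have hη₁ : 0 < η₁ := by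
    have : α₁C * ρ₂ ≤ 0 := mul_nonpos_of_nonpos_of_nonneg hα₁ hρ₂
    simp only [η₁]; nlinarith
  have hη₂ : 0 < η₂ := by
    have : α₂C * ρ₁ ≤ 0 := mul_nonpos_of_nonpos_of_nonneg hα₂ hρ₁
    simp only [η₂]; nlinarith
  have hη₁' : η₁ ≠ 0 := ne_of_gt hη₁
  have hη₂' : η₂ ≠ 0 := ne_of_gt hη₂
  set D : ℝ := a₁₁ * a₂₂ - a₁₂ * a₂₁ with hDdef
  have hD : D = ((1 - α₁C * α₂C) * (1 - ρ₁ - ρ₂)) / (η₁ * η₂) := by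
    simp only [hDdef, a₁₁, a₁₂, a₂₁, a₂₂]
    field_simp
    simp only [η₁, η₂]
    ring
  have hDne : D ≠ 0 := by
    rw [hD]
    apply div_ne_zero
    · nlinarith
    · exact mul_ne_zero hη₁' hη₂'
  refine ⟨((a₂₂ * a₁₃ - a₁₂ * a₂₃) / D, (a₁₁ * a₂₃ - a₂₁ * a₁₃) / D), ⟨?_, ?_⟩, ?_⟩
  · field_simp
    ring
  · field_simp
    ring
  · rintro ⟨x, y⟩ ⟨h1, h2⟩
    have hx : x = (a₂₂ * a₁₃ - a₁₂ * a₂₃) / D := by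
      rw [eq_div_iff hDne, hDdef]
      linear_combination a₂₂ * h1 - a₁₂ * h2
    have hy : y = (a₁₁ * a₂₃ - a₂₁ * a₁₃) / D := by
      rw [eq_div_iff hDne, hDdef]
      linear_combination a₁₁ * h2 - a₂₁ * h1
    simp [hx, hy]
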